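/- Let φ : ℝ → ℝ be strictly decreasing (strictly antitone) and convex, and let g : ℝ → ℝ satisfy g(φ(x)) = x for all x ∈ ℝ (so g restricts to the inverse of φ on its range T = Set.range φ). Then the map x ↦ φ(−g(x)) is convex on T, i.e., ConvexOn ℝ (Set.range φ) (fun x => φ(−g(x))). -/

import Mathlib

/-- If `φ : ℝ → ℝ` is strictly decreasing and convex, and `g` is a left inverse of `φ`
(so `g` restricts to the inverse of `φ` on its range `T = Set.range φ`), then the map
`x ↦ φ(−g(x))` (i.e. `x ↦ φ(−φ⁻¹(x))` on `T`) is convex on `T`. -/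
theorem phi_neg_inv_convexOn
    (φ g : ℝ → ℝ) (hφ_anti : StrictAnti φ) (hφ_conv : ConvexOn ℝ Set.univ φ)
    (hg : ∀ x : ℝ, g (φ x) = x) :
    ConvexOn ℝ (Set.range φ) (fun x => φ (-g x)) := by
  have hcont : Continuous φ := by
    have := hφ_conv.continuousOn isOpen_univ
    rw [← continuousOn_univ]; exact this
  have hconv_range : Convex ℝ (Set.range φ) := by
    have : IsPreconnected (Set.range φ) := by
      rw [← Set.image_univ]
      exact isPreconnected_univ.image φ hcont.continuousOn
    exact this.ordConnected.convex
  refine ⟨hconv_range, ?_⟩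
  rintro x ⟨a, rfl⟩ y ⟨b, rfl⟩ t s ht hs hts
  obtain ⟨c, hc⟩ : t • φ a + s • φ b ∈ Set.range φ :=
    hconv_range ⟨a, rfl⟩ ⟨b, rfl⟩ ht hs hts
  simp only []
  rw [← hc, hg, hg, hg]
  have h1 : φ (t * a + s * b) ≤ φ c := by
    rw [hc]
    exact hφ_conv.2 trivial trivial ht hs hts
  have h2 : c ≤ t * a + s * b := by
    by_contra h
    exact absurd h1 (not_le.mpr (hφ_anti (not_le.mp h)))
  have h3 : t • (-a) + s • (-b) ≤ -c := by
    simp only [smul_eq_mul]; linarith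
  calc φ (-c) ≤ φ (t • (-a) + s • (-b)) := hφ_anti.antitone h3
    _ ≤ t • φ (-a) + s • φ (-b) := hφ_conv.2 trivial trivial ht hs hts
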